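/- Let p(x) = Σ_{j=0}^{d} a_j x^j be a real polynomial of degree at most d, and let A := sup_{x₁, x₂ ∈ [0,1]} |p(x₁) − p(x₂)|. Then for every j with 1 ≤ j ≤ d, the coefficient satisfies |a_j| ≤ A · 2^{7d/2}. -/

import Mathlib

open scoped BigOperators

open Polynomial Finset

open Polynomial Finset in
theorem aux_prod_coeff {ι : Type*} [DecidableEq ι] (s : Finset ι) (c : ι → ℝ)
    (hc : ∀ i ∈ s, |c i| ≤ 1) (k : ℕ) :
    |(∏ i ∈ s, (X - C (c i))).coeff k| ≤ 2 ^ s.card := by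
  induction s using Finset.cons_induction generalizing k with
  | empty => simp [Polynomial.coeff_one]; split <;> norm_num
  | cons i s hi ih =>
    rw [Finset.prod_cons]
    have hci : |c i| ≤ 1 := hc i (Finset.mem_cons_self i s)
    have ih' := fun k => ih (fun j hj => hc j (Finset.mem_cons_of_mem hj)) k
    have hexp : ((X - C (c i)) * ∏ j ∈ s, (X - C (c j))).coeff k
        = (X * ∏ j ∈ s, (X - C (c j))).coeff k - c i * (∏ j ∈ s, (X - C (c j))).coeff k := by
      rw [sub_mul, Polynomial.coeff_sub, Polynomial.coeff_C_mul]
    rw [hexp, Finset.card_cons, pow_succ]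
    have h1 : |(X * ∏ j ∈ s, (X - C (c j))).coeff k| ≤ 2 ^ s.card := by
      cases k with
      | zero => simpa [Polynomial.coeff_X_mul_zero] using (by positivity : (0:ℝ) ≤ 2 ^ s.card)
      | succ n => rw [Polynomial.coeff_X_mul]; exact ih' n
    calc |(X * ∏ j ∈ s, (X - C (c j))).coeff k - c i * (∏ j ∈ s, (X - C (c j))).coeff k|
        ≤ |(X * ∏ j ∈ s, (X - C (c j))).coeff k| + |c i| * |(∏ j ∈ s, (X - C (c j))).coeff k| := by
          rw [← abs_mul]; exact abs_sub _ _
      _ ≤ 2 ^ s.card + 1 * 2 ^ s.card := by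
          exact add_le_add h1 (by
            calc |c i| * |(∏ j ∈ s, (X - C (c j))).coeff k| ≤ 1 * 2 ^ s.card :=
              mul_le_mul hci (ih' k) (abs_nonneg _) one_pos.le
            )
      _ = 2 ^ s.card * 2 := by ring
open Finset in
theorem aux_prod_abs (d i : ℕ) (hi : i ≤ d) :
    ∏ j ∈ (Finset.range (d+1)).erase i, |(i:ℝ) - (j:ℝ)|
      = (Nat.factorial i : ℝ) * (Nat.factorial (d - i) : ℝ) := by
  have hset : (Finset.range (d+1)).erase i = Finset.range i ∪ Finset.Ico (i+1) (d+1) := by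
    ext x; simp [Finset.mem_erase, Finset.mem_range, Finset.mem_Ico]; omega
  have hdisj : Disjoint (Finset.range i) (Finset.Ico (i+1) (d+1)) := by
    rw [Finset.disjoint_left]; intro x hx hx'
    simp [Finset.mem_range] at hx; simp [Finset.mem_Ico] at hx'; omega
  rw [hset, Finset.prod_union hdisj]
  have h1 : ∏ j ∈ Finset.range i, |(i:ℝ) - (j:ℝ)| = (Nat.factorial i : ℝ) := by
    have : ∀ j ∈ Finset.range i, |(i:ℝ) - (j:ℝ)| = ((i - j : ℕ) : ℝ) := by
      intro j hj; rw [Finset.mem_range] at hj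
      rw [Nat.cast_sub hj.le, abs_of_nonneg]
      have : (j:ℝ) < i := by exact_mod_cast hj
      linarith
    rw [Finset.prod_congr rfl this, ← Nat.cast_prod]
    congr 1
    calc ∏ j ∈ Finset.range i, (i - j) = ∏ j ∈ Finset.range i, (j + 1) := by
          rw [← Finset.prod_range_reflect (fun k => k + 1) i]
          apply Finset.prod_congr rfl
          intro j hj; rw [Finset.mem_range] at hj; omega
      _ = Nat.factorial i := Finset.prod_range_add_one_eq_factorial i
  have h2 : ∏ j ∈ Finset.Ico (i+1) (d+1), |(i:ℝ) - (j:ℝ)| = (Nat.factorial (d - i) : ℝ) := by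
    have : ∀ j ∈ Finset.Ico (i+1) (d+1), |(i:ℝ) - (j:ℝ)| = ((j - i : ℕ) : ℝ) := by
      intro j hj; rw [Finset.mem_Ico] at hj
      rw [Nat.cast_sub (by omega), abs_sub_comm, abs_of_nonneg]
      have : (i:ℝ) < j := by exact_mod_cast (by omega : i < j)
      linarith
    rw [Finset.prod_congr rfl this, ← Nat.cast_prod]
    congr 1
    rw [Finset.prod_Ico_eq_prod_range]
    have : ∀ j ∈ Finset.range (d + 1 - (i + 1)), (i + 1 + j - i) = j + 1 := by
      intro j _; omega
    rw [Finset.prod_congr rfl this, Finset.prod_range_add_one_eq_factorial]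
    congr 1; omega
  rw [h1, h2]
theorem aux_pow_le_fact (d : ℕ) : (d:ℝ)^d ≤ (Nat.factorial d : ℝ) * Real.exp 1 ^ d := by
  have h0 : (0:ℝ) ≤ d := Nat.cast_nonneg d
  have hsum := Real.sum_le_exp_of_nonneg h0 (d+1)
  have hterm : (d:ℝ)^d / (Nat.factorial d : ℝ) ≤ Real.exp d := by
    refine le_trans ?_ hsum
    refine Finset.single_le_sum (f := fun i => (d:ℝ)^i / (Nat.factorial i : ℝ)) ?_ ?_
    · intro i _; positivity
    · simp
  have hexp : Real.exp (d:ℝ) = Real.exp 1 ^ d := by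
    rw [← Real.exp_nat_mul]; norm_num
  have hfac : (0:ℝ) < (Nat.factorial d : ℝ) := by exact_mod_cast Nat.factorial_pos d
  rw [div_le_iff₀ hfac] at hterm
  calc (d:ℝ)^d ≤ Real.exp d * Nat.factorial d := hterm
    _ = Nat.factorial d * Real.exp 1 ^ d := by rw [hexp]; ring

theorem aux_const : 4 * Real.exp 1 ≤ (2:ℝ) ^ ((7:ℝ)/2) := by
  have h1 : (2:ℝ) ^ ((7:ℝ)/2) = Real.sqrt 128 := by
    rw [show (128:ℝ) = 2 ^ (7:ℕ) by norm_num, Real.sqrt_eq_rpow, ← Real.rpow_natCast 2 7,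
      ← Real.rpow_mul (by norm_num)]
    norm_num
  rw [h1]
  rw [Real.le_sqrt (by positivity) (by norm_num)]
  nlinarith [Real.exp_one_lt_d9, Real.exp_pos 1]
open Polynomial Finset

/-- Coefficient bound for a real polynomial `p(x) = Σ_{j=0}^d a_j x^j` in terms of
`A := sup_{x₁,x₂ ∈ [0,1]} |p(x₁) - p(x₂)|` (formalized via an arbitrary upper bound `A`):
for every `1 ≤ j ≤ d`, `|a_j| ≤ A · 2^{3.5 d}`. -/
theorem coeff_bound (d : ℕ) (a : ℕ → ℝ) (A : ℝ)
    (hA : ∀ x₁ ∈ Set.Icc (0 : ℝ) 1, ∀ x₂ ∈ Set.Icc (0 : ℝ) 1,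
      |(∑ j ∈ Finset.range (d + 1), a j * x₁ ^ j) -
        (∑ j ∈ Finset.range (d + 1), a j * x₂ ^ j)| ≤ A)
    (j : ℕ) (hj1 : 1 ≤ j) (hjd : j ≤ d) :
    |a j| ≤ A * 2 ^ ((7 * (d : ℝ)) / 2) := by
  have hd : 1 ≤ d := le_trans hj1 hjd
  have hd0 : (0:ℝ) < d := by exact_mod_cast hd
  have h01 : (0:ℝ) ∈ Set.Icc (0:ℝ) 1 := ⟨le_rfl, zero_le_one⟩
  have hA0 : 0 ≤ A := by simpa using hA 0 h01 0 h01
  set P : ℝ[X] := ∑ k ∈ Finset.range (d+1), C (a k) * X^k with hPdef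
  set Q : ℝ[X] := P - C (a 0) with hQdef
  have hPeval : ∀ x : ℝ, P.eval x = ∑ k ∈ Finset.range (d+1), a k * x^k := by
    intro x; simp [hPdef, Polynomial.eval_finset_sum]
  have ha0 : ∑ k ∈ Finset.range (d+1), a k * (0:ℝ)^k = a 0 := by
    rw [Finset.sum_eq_single_of_mem 0 (Finset.mem_range.2 (Nat.succ_pos d))]
    · simp
    · intro b _ hb; simp [zero_pow hb]
  have hQeval : ∀ x ∈ Set.Icc (0:ℝ) 1, |Q.eval x| ≤ A := by
    intro x hx
    have := hA x hx 0 h01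
    rw [ha0] at this
    simpa [hQdef, hPeval] using this
  set v : ℕ → ℝ := fun i => (i:ℝ) / d with hvdef
  have hv : Set.InjOn v (Finset.range (d+1)) := by
    intro x _ y _ hxy
    have : (x:ℝ) = y := by
      simp only [hvdef] at hxy; exact_mod_cast (div_left_inj' hd0.ne').mp hxy
    exact_mod_cast this
  have hvmem : ∀ i ∈ Finset.range (d+1), v i ∈ Set.Icc (0:ℝ) 1 := by
    intro i hi
    rw [Finset.mem_range] at hi
    constructor
    · positivity
    · rw [div_le_one hd0]; exact_mod_cast Nat.lt_succ_iff.mp hi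
  have hdegP : P.degree ≤ (d : ℕ) := by
    apply (Polynomial.degree_sum_le _ _).trans
    apply Finset.sup_le
    intro k hk
    refine (Polynomial.degree_C_mul_X_pow_le _ _).trans ?_
    exact_mod_cast Nat.lt_succ_iff.mp (Finset.mem_range.mp hk)
  have hQdeg : Q.degree < (#(Finset.range (d+1)) : ℕ) := by
    rw [Finset.card_range]
    refine lt_of_le_of_lt ((Polynomial.degree_sub_le _ _).trans (max_le hdegP
      (Polynomial.degree_C_le.trans (by exact_mod_cast Nat.zero_le d)))) ?_
    exact_mod_cast Nat.lt_succ_self d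
  have hQ := Lagrange.eq_interpolate hv hQdeg
  have hcoeffQ : Q.coeff j = a j := by
    rw [hQdef, Polynomial.coeff_sub, hPdef, Polynomial.finset_sum_coeff]
    have : ∀ k ∈ Finset.range (d+1), (C (a k) * X^k).coeff j = if k = j then a k else 0 := by
      intro k _
      rw [Polynomial.coeff_C_mul, Polynomial.coeff_X_pow]
      by_cases h : k = j
      · simp [h]
      · simp [h, Ne.symm h]
    rw [Finset.sum_congr rfl this, Finset.sum_ite_eq' (Finset.range (d+1)) j a,
      if_pos (Finset.mem_range.2 (Nat.lt_succ_of_le hjd)),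
      Polynomial.coeff_C, if_neg (by omega)]
    ring
  have hrep : a j = ∑ i ∈ Finset.range (d+1),
      Q.eval (v i) * (Lagrange.basis (Finset.range (d+1)) v i).coeff j := by
    conv_lhs => rw [← hcoeffQ, hQ]
    rw [Lagrange.interpolate_apply, Polynomial.finset_sum_coeff]
    simp [Polynomial.coeff_C_mul]
  have hbasis : ∀ i ∈ Finset.range (d+1),
      |(Lagrange.basis (Finset.range (d+1)) v i).coeff j|
        ≤ (d:ℝ)^d / ((Nat.factorial i : ℝ) * (Nat.factorial (d-i) : ℝ)) * 2^d := by
    intro i hi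
    have hid : i ≤ d := Nat.lt_succ_iff.mp (Finset.mem_range.mp hi)
    have hcard : #((Finset.range (d+1)).erase i) = d := by
      rw [Finset.card_erase_of_mem hi, Finset.card_range]
      omega
    have hsplit : Lagrange.basis (Finset.range (d+1)) v i
        = C (∏ k ∈ (Finset.range (d+1)).erase i, (v i - v k)⁻¹)
          * ∏ k ∈ (Finset.range (d+1)).erase i, (X - C (v k)) := by
      rw [Lagrange.basis]
      simp only [Lagrange.basisDivisor]
      rw [Finset.prod_mul_distrib, map_prod]
    have hprodabs : ∏ k ∈ (Finset.range (d+1)).erase i, |v i - v k|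
        = ((Nat.factorial i : ℝ) * (Nat.factorial (d-i) : ℝ)) / (d:ℝ)^d := by
      have : ∀ k ∈ (Finset.range (d+1)).erase i, |v i - v k| = |(i:ℝ) - (k:ℝ)| / d := by
        intro k _
        rw [hvdef]
        rw [div_sub_div_same, abs_div, abs_of_pos hd0]
      rw [Finset.prod_congr rfl this, Finset.prod_div_distrib, Finset.prod_const, hcard,
        aux_prod_abs d i hid]
    have hfacpos : (0:ℝ) < (Nat.factorial i : ℝ) * (Nat.factorial (d-i) : ℝ) := by
      have h1 : 0 < Nat.factorial i := Nat.factorial_pos i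
      have h2 : 0 < Nat.factorial (d-i) := Nat.factorial_pos (d-i)
      positivity
    rw [hsplit, Polynomial.coeff_C_mul, abs_mul]
    have habs1 : |∏ k ∈ (Finset.range (d+1)).erase i, (v i - v k)⁻¹|
        = (d:ℝ)^d / ((Nat.factorial i : ℝ) * (Nat.factorial (d-i) : ℝ)) := by
      rw [Finset.abs_prod]
      have : ∀ k ∈ (Finset.range (d+1)).erase i, |(v i - v k)⁻¹| = |v i - v k|⁻¹ := by
        intro k _; exact abs_inv _
      rw [Finset.prod_congr rfl this, Finset.prod_inv_distrib, hprodabs, inv_div]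
    rw [habs1]
    have habs2 : |(∏ k ∈ (Finset.range (d+1)).erase i, (X - C (v k))).coeff j| ≤ 2^d := by
      have := aux_prod_coeff ((Finset.range (d+1)).erase i) v
        (fun k hk => by
          have hmem := hvmem k (Finset.mem_of_mem_erase hk)
          rw [abs_of_nonneg hmem.1]; exact hmem.2) j
      rwa [hcard] at this
    have hpos : (0:ℝ) ≤ (d:ℝ)^d / ((Nat.factorial i : ℝ) * (Nat.factorial (d-i) : ℝ)) := by
      positivity
    calc (d:ℝ)^d / ((Nat.factorial i : ℝ) * (Nat.factorial (d-i) : ℝ))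
          * |(∏ k ∈ (Finset.range (d+1)).erase i, (X - C (v k))).coeff j|
        ≤ (d:ℝ)^d / ((Nat.factorial i : ℝ) * (Nat.factorial (d-i) : ℝ)) * 2^d :=
          mul_le_mul_of_nonneg_left habs2 hpos
      _ = _ := rfl
  -- sum bound
  have hsum1 : |a j| ≤ ∑ i ∈ Finset.range (d+1),
      A * ((d:ℝ)^d / ((Nat.factorial i : ℝ) * (Nat.factorial (d-i) : ℝ)) * 2^d) := by
    rw [hrep]
    refine (Finset.abs_sum_le_sum_abs _ _).trans ?_
    apply Finset.sum_le_sum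
    intro i hi
    rw [abs_mul]
    exact mul_le_mul (hQeval (v i) (hvmem i hi)) (hbasis i hi) (abs_nonneg _)
      hA0
  have hchoose : ∀ i ∈ Finset.range (d+1),
      (d:ℝ)^d / ((Nat.factorial i : ℝ) * (Nat.factorial (d-i) : ℝ))
        = (d:ℝ)^d * (d.choose i : ℝ) / (Nat.factorial d : ℝ) := by
    intro i hi
    have hid : i ≤ d := Nat.lt_succ_iff.mp (Finset.mem_range.mp hi)
    have keyN := Nat.choose_mul_factorial_mul_factorial hid
    have key : (d.choose i : ℝ) * ((Nat.factorial i : ℝ) * (Nat.factorial (d-i) : ℝ))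
        = (Nat.factorial d : ℝ) := by
      rw [← keyN]; push_cast; ring
    have h1 : (0:ℝ) < (Nat.factorial i : ℝ) * (Nat.factorial (d-i) : ℝ) := by
      have := Nat.factorial_pos i; have := Nat.factorial_pos (d-i); positivity
    have h2 : (0:ℝ) < (Nat.factorial d : ℝ) := by exact_mod_cast Nat.factorial_pos d
    rw [div_eq_div_iff h1.ne' h2.ne', ← key]
    ring
  have hsum2 : ∑ i ∈ Finset.range (d+1),
      A * ((d:ℝ)^d / ((Nat.factorial i : ℝ) * (Nat.factorial (d-i) : ℝ)) * 2^d)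
      = A * 2^d * (d:ℝ)^d / (Nat.factorial d : ℝ) * 2^d := by
    have hchoosesum : ∑ i ∈ Finset.range (d+1), (d.choose i : ℝ) = 2^d := by
      rw [← Nat.cast_sum]
      exact_mod_cast congrArg (Nat.cast : ℕ → ℝ) (Nat.sum_range_choose d)
    calc ∑ i ∈ Finset.range (d+1),
          A * ((d:ℝ)^d / ((Nat.factorial i : ℝ) * (Nat.factorial (d-i) : ℝ)) * 2^d)
        = ∑ i ∈ Finset.range (d+1),
          (A * (d:ℝ)^d / (Nat.factorial d : ℝ) * 2^d) * (d.choose i : ℝ) := by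
          apply Finset.sum_congr rfl
          intro i hi
          rw [hchoose i hi]; ring
      _ = (A * (d:ℝ)^d / (Nat.factorial d : ℝ) * 2^d) * 2^d := by
          rw [← Finset.mul_sum, hchoosesum]
      _ = A * 2^d * (d:ℝ)^d / (Nat.factorial d : ℝ) * 2^d := by ring
  -- final bound
  have hfactd : (0:ℝ) < (Nat.factorial d : ℝ) := by exact_mod_cast Nat.factorial_pos d
  have hdf : (d:ℝ)^d / (Nat.factorial d : ℝ) ≤ Real.exp 1 ^ d := by
    rw [div_le_iff₀ hfactd]
    calc (d:ℝ)^d ≤ (Nat.factorial d : ℝ) * Real.exp 1 ^ d := aux_pow_le_fact d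
      _ = Real.exp 1 ^ d * (Nat.factorial d : ℝ) := by ring
  have hstep1 : |a j| ≤ A * (4 * Real.exp 1)^d := by
    calc |a j| ≤ A * 2^d * (d:ℝ)^d / (Nat.factorial d : ℝ) * 2^d := by
          rw [← hsum2]; exact hsum1
      _ = A * 2^d * 2^d * ((d:ℝ)^d / (Nat.factorial d : ℝ)) := by ring
      _ ≤ A * 2^d * 2^d * Real.exp 1 ^ d := by
          apply mul_le_mul_of_nonneg_left hdf
          positivity
      _ = A * (4 * Real.exp 1)^d := by
          rw [mul_pow]
          ring_nf
          rw [show (4:ℝ)^d = 2^d * 2^d by rw [← mul_pow]; norm_num]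
          ring
  have hrpow : ((2:ℝ) ^ ((7:ℝ)/2)) ^ d = (2:ℝ) ^ ((7*(d:ℝ))/2) := by
    rw [← Real.rpow_natCast ((2:ℝ) ^ ((7:ℝ)/2)) d, ← Real.rpow_mul (by norm_num)]
    ring_nf
  calc |a j| ≤ A * (4 * Real.exp 1)^d := hstep1
    _ ≤ A * ((2:ℝ) ^ ((7:ℝ)/2))^d := by
        apply mul_le_mul_of_nonneg_left _ hA0
        exact pow_le_pow_left₀ (by positivity) aux_const d
    _ = A * 2 ^ ((7*(d:ℝ))/2) := by rw [hrpow]
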